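/- For γ > 0 and any β ∈ (0,1), the integral R(v) = ∫_{v^{-(1-β)}}^{1} γ z^{γ-1}(1 - z^{a}) dz, where a = A(v^β) → 0 as v → ∞, satisfies R(v) = O(v^{-γ(1-β)} ∨ |A(v^β)|) as v → ∞, provided |A| is bounded. -/

import Mathlib

open Real Filter Asymptotics

lemma aux_abs_exp_sub_one (x : ℝ) : |Real.exp x - 1| ≤ |x| * Real.exp |x| := by
  rcases le_or_gt x 0 with hx | hx
  · have h1 : Real.exp x ≤ 1 := Real.exp_le_one_iff.2 hx
    have h2 : x + 1 ≤ Real.exp x := Real.add_one_le_exp x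
    have h3 : (1:ℝ) ≤ Real.exp (-x) := Real.one_le_exp (by linarith)
    rw [abs_of_nonpos (by linarith), abs_of_nonpos hx]
    nlinarith
  · have h2 : -x + 1 ≤ Real.exp (-x) := Real.add_one_le_exp (-x)
    have h4 : Real.exp (-x) * Real.exp x = 1 := by
      rw [← Real.exp_add]; simp
    have h5 : (0:ℝ) < Real.exp x := Real.exp_pos x
    have h1 : (1:ℝ) ≤ Real.exp x := Real.one_le_exp hx.le
    rw [abs_of_nonneg (by linarith), abs_of_pos hx]
    nlinarith

lemma aux_key (γ a z : ℝ) (hγ : 0 < γ) (hz0 : 0 < z) (hz1 : z ≤ 1) (ha : |a| ≤ γ/4) :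
    |γ * z ^ (γ-1) * (1 - z ^ a)| ≤ 4 * |a| * z ^ (γ/2 - 1) := by
  have hlog : Real.log z ≤ 0 := Real.log_nonpos hz0.le hz1
  have h1 : |1 - z ^ a| ≤ |a| * (-Real.log z) * z ^ (-|a|) := by
    rw [Real.rpow_def_of_pos hz0, abs_sub_comm, mul_comm (Real.log z) a]
    have hxabs : |a * Real.log z| = |a| * (-Real.log z) := by
      rw [abs_mul, abs_of_nonpos hlog]
    have hz : z ^ (-|a|) = Real.exp (|a * Real.log z|) := by
      rw [Real.rpow_def_of_pos hz0, hxabs]; ring_nf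
    rw [hz, ← hxabs]
    exact aux_abs_exp_sub_one _
  have h2 : -Real.log z ≤ (4/γ) * z ^ (-(γ/4)) := by
    have h := Real.log_le_rpow_div (x := z⁻¹) (by positivity) (by positivity : (0:ℝ) < γ/4)
    rw [Real.log_inv, Real.inv_rpow hz0.le, ← Real.rpow_neg hz0.le] at h
    calc -Real.log z ≤ z ^ (-(γ/4)) / (γ/4) := h
      _ = (4/γ) * z ^ (-(γ/4)) := by
          rw [div_eq_mul_inv, inv_div, mul_comm]
  have h3 : z ^ (-(γ/4)) * z ^ (-|a|) ≤ z ^ (-(γ/2)) := by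
    rw [← Real.rpow_add hz0]
    exact Real.rpow_le_rpow_of_exponent_ge hz0 hz1 (by linarith)
  have habs : |γ * z ^ (γ-1) * (1 - z ^ a)| = γ * z ^ (γ-1) * |1 - z ^ a| := by
    rw [abs_mul, abs_of_nonneg (by positivity)]
  rw [habs]
  have hbound : |1 - z ^ a| ≤ (4/γ) * |a| * z ^ (-(γ/2)) := by
    calc |1 - z ^ a| ≤ |a| * (-Real.log z) * z ^ (-|a|) := h1
      _ ≤ |a| * ((4/γ) * z ^ (-(γ/4))) * z ^ (-|a|) := by
          apply mul_le_mul_of_nonneg_right _ (by positivity)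
          exact mul_le_mul_of_nonneg_left h2 (abs_nonneg a)
      _ = (4/γ) * |a| * (z ^ (-(γ/4)) * z ^ (-|a|)) := by ring
      _ ≤ (4/γ) * |a| * z ^ (-(γ/2)) := by
          apply mul_le_mul_of_nonneg_left h3 (by positivity)
  calc γ * z ^ (γ-1) * |1 - z ^ a| ≤ γ * z ^ (γ-1) * ((4/γ) * |a| * z ^ (-(γ/2))) := by
        apply mul_le_mul_of_nonneg_left hbound (by positivity)
    _ = 4 * |a| * (z ^ (γ-1) * z ^ (-(γ/2))) := by
        field_simp
    _ = 4 * |a| * z ^ (γ/2 - 1) := by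
        rw [← Real.rpow_add hz0]; ring_nf

/-- For γ > 0 and β ∈ (0,1), with A bounded and A(v) → 0 as v → ∞, the
integral R(v) = ∫_{v^{-(1-β)}}^{1} γ z^{γ-1}(1 - z^{A(v^β)}) dz satisfies
R(v) = O(v^{-γ(1-β)} ∨ |A(v^β)|) as v → ∞. -/
theorem integral_bigO_bound (γ β : ℝ) (hγ : 0 < γ) (hβ0 : 0 < β) (hβ1 : β < 1)
    (A : ℝ → ℝ) (hAbdd : ∃ C, ∀ v, |A v| ≤ C)
    (hA0 : Tendsto A atTop (nhds 0)) :
    (fun v : ℝ =>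
        ∫ z in (v ^ (-(1 - β)))..1, γ * z ^ (γ - 1) * (1 - z ^ A (v ^ β)))
      =O[atTop] fun v : ℝ => max (v ^ (-γ * (1 - β))) |A (v ^ β)| := by
  rw [isBigO_iff]
  refine ⟨8/γ, ?_⟩
  have hAt : Tendsto (fun v : ℝ => |A (v ^ β)|) atTop (nhds 0) := by
    have h := (hA0.comp (tendsto_rpow_atTop hβ0)).abs
    simpa using h
  filter_upwards [eventually_ge_atTop (1:ℝ),
      hAt.eventually (eventually_le_nhds (by positivity : (0:ℝ) < γ/4))] with v hv ha
  set a := A (v ^ β) with hadef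
  set ε := v ^ (-(1-β)) with hεdef
  have hv0 : (0:ℝ) < v := lt_of_lt_of_le one_pos hv
  have hε0 : 0 < ε := Real.rpow_pos_of_pos hv0 _
  have hε1 : ε ≤ 1 := Real.rpow_le_one_of_one_le_of_nonpos hv (by linarith)
  have hg : IntervalIntegrable (fun z : ℝ => 4 * |a| * z ^ (γ/2-1))
      MeasureTheory.volume ε 1 :=
    (intervalIntegral.intervalIntegrable_rpow' (by linarith)).const_mul _
  have hptwise : ∀ᵐ t ∂MeasureTheory.volume.restrict (Set.uIoc ε 1),
      ‖γ * t ^ (γ - 1) * (1 - t ^ a)‖ ≤ 4 * |a| * t ^ (γ/2-1) := by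
    rw [MeasureTheory.ae_restrict_iff' measurableSet_uIoc]
    filter_upwards with t ht
    rw [Set.uIoc_of_le hε1] at ht
    exact aux_key γ a t hγ (hε0.trans ht.1) ht.2 ha
  have hnorm : ‖∫ z in ε..1, γ * z ^ (γ - 1) * (1 - z ^ a)‖
      ≤ |∫ z in ε..1, 4 * |a| * z ^ (γ/2-1)| :=
    (intervalIntegral.norm_integral_le_of_norm_le hε1
      (((MeasureTheory.ae_restrict_iff' measurableSet_uIoc).1 hptwise).mono
        fun t ht h => ht (by rwa [Set.uIoc_of_le hε1])) hg).trans (le_abs_self _)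
  calc ‖∫ z in ε..1, γ * z ^ (γ - 1) * (1 - z ^ a)‖
      ≤ |∫ z in ε..1, 4 * |a| * z ^ (γ/2-1)| := hnorm
    _ ≤ 8/γ * |a| := by
        rw [intervalIntegral.integral_const_mul, integral_rpow (Or.inl (by linarith))]
        have h1 : ε ^ (γ/2-1+1) ≤ 1 :=
          Real.rpow_le_one hε0.le hε1 (by linarith)
        have h2 : (0:ℝ) ≤ ε ^ (γ/2-1+1) := Real.rpow_nonneg hε0.le _
        rw [Real.one_rpow, abs_mul, abs_mul, abs_abs]
        have h3 : |(1 - ε ^ (γ/2-1+1)) / (γ/2-1+1)| ≤ 2/γ := by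
          rw [abs_div, abs_of_nonneg (by linarith), abs_of_nonneg (by linarith)]
          rw [div_le_div_iff₀ (by linarith) hγ]
          nlinarith
        calc |(4:ℝ)| * |a| * |(1 - ε ^ (γ/2-1+1)) / (γ/2-1+1)|
            ≤ |(4:ℝ)| * |a| * (2/γ) := by
              apply mul_le_mul_of_nonneg_left h3 (by positivity)
          _ = 8/γ * |a| := by rw [abs_of_nonneg (by norm_num : (0:ℝ) ≤ 4)]; ring
    _ ≤ 8/γ * ‖max (v ^ (-γ * (1 - β))) |a|‖ := by
        apply mul_le_mul_of_nonneg_left _ (by positivity)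
        rw [Real.norm_eq_abs, abs_of_nonneg (le_trans (abs_nonneg a) (le_max_right _ _))]
        exact le_max_right _ _
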